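/- The endomorphism Ř satisfies the quadratic (Hecke) relation (Ř − q^{-1}·id) ∘ (Ř + q·id) = 0 on V ⊗ V; equivalently, Ř ∘ Ř = (q^{-1} − q)·Ř + id. -/

import Mathlib

noncomputable section

/-- The matrix (in the standard basis of `V ⊗ V`, `V` having basis `x_1, …, x_N` indexed by
`Fin N` with parity `0` for the first `m` indices and `1` for the rest) of the braiding `Ř`
of the vector representation of `U_q(gl(m|n))`:
`Ř(x_a ⊗ x_a) = q⁻¹·(x_a ⊗ x_a)` if `a ≤ m`; `Ř(x_a ⊗ x_a) = −q·(x_a ⊗ x_a)` if `a > m`;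
`Ř(x_a ⊗ x_b) = (−1)^{|a||b|}·(x_b ⊗ x_a)` if `a < b`;
`Ř(x_a ⊗ x_b) = (−1)^{|a||b|}·(x_b ⊗ x_a) + (q⁻¹ − q)·(x_a ⊗ x_b)` if `a > b`.
The first argument of the matrix is the output index, the second the input index. -/
def Rmat (F : Type*) [Field F] (q : F) (m N : ℕ) :
    Matrix (Fin N × Fin N) (Fin N × Fin N) F :=
  Matrix.of fun out inp =>
    if inp.1 = inp.2 then
      (if (inp.1 : ℕ) < m then q⁻¹ else -q) * (if out = inp then 1 else 0)
    else
      (if m ≤ (inp.1 : ℕ) ∧ m ≤ (inp.2 : ℕ) then (-1 : F) else 1) *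
          (if out = (inp.2, inp.1) then 1 else 0) +
        (if inp.2 < inp.1 then (q⁻¹ - q) * (if out = inp then 1 else 0) else 0)

lemma Rmat_apply (F : Type*) [Field F] (q : F) (m N : ℕ) (i k : Fin N × Fin N) :
    Rmat F q m N i k =
      (if k.1 = k.2 then (if (k.1 : ℕ) < m then q⁻¹ else -q)
        else if k.2 < k.1 then q⁻¹ - q else 0) * (if i = k then 1 else 0) +
      (if k.1 = k.2 then 0 else if m ≤ (k.1 : ℕ) ∧ m ≤ (k.2 : ℕ) then (-1 : F) else 1) *
        (if i = (k.2, k.1) then 1 else 0) := by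
  simp only [Rmat, Matrix.of_apply]
  by_cases h : k.1 = k.2
  · have hk : ((k.2, k.1) : Fin N × Fin N) = k := by
      ext <;> simp [h]
    simp [h, hk]
  · simp only [if_neg h]
    split_ifs <;> ring

lemma Rmat_sq (F : Type*) [Field F] (q : F) (hq : q ≠ 0) (m N : ℕ) :
    Rmat F q m N * Rmat F q m N = (q⁻¹ - q) • Rmat F q m N + 1 := by
  have hswap : ∀ k : Fin N × Fin N, ((((k.2, k.1) : Fin N × Fin N).2,
      ((k.2, k.1) : Fin N × Fin N).1) : Fin N × Fin N) = k := fun k => rfl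
  ext i k
  rw [Matrix.mul_apply]
  simp only [Rmat_apply, Matrix.add_apply, Matrix.smul_apply, Matrix.one_apply, smul_eq_mul,
    mul_add, add_mul, mul_ite, ite_mul, mul_one, mul_zero, one_mul, zero_mul,
    Finset.sum_add_distrib, Finset.sum_ite_eq, Finset.sum_ite_eq', Finset.mem_univ, if_true]
  by_cases hk : k.1 = k.2
  · have hkk : ((k.2, k.1) : Fin N × Fin N) = k := by ext <;> simp [hk]
    simp only [hkk, hk, if_true, if_pos rfl]
    split_ifs <;> field_simp <;> ring
  · have hne : k.2 ≠ k.1 := fun h => hk h.symm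
    simp only [if_neg hk, if_neg hne, hswap]
    rcases lt_or_gt_of_ne hk with hlt | hgt
    · simp only [if_pos hlt, if_neg (not_lt.mpr hlt.le), if_neg (asymm hlt)]
      split_ifs <;> first | ring1 | (exfalso; omega) | (field_simp)
    · simp only [if_pos hgt, if_neg (not_lt.mpr hgt.le), if_neg (asymm hgt)]
      split_ifs <;> first | ring1 | (exfalso; omega) | (field_simp)

/-- The braiding `Ř` of the vector representation of `U_q(gl(m|n))` satisfies the Hecke
quadratic relation `(Ř − q⁻¹·id) ∘ (Ř + q·id) = 0`; equivalently
`Ř ∘ Ř = (q⁻¹ − q)·Ř + id`. -/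
theorem stmt5 (F : Type*) [Field F] (q : F) (hq : q ≠ 0) (m n : ℕ) (hmn : 1 ≤ m + n) :
    ((Matrix.toLin' (Rmat F q m (m + n)) - q⁻¹ • LinearMap.id) ∘ₗ
        (Matrix.toLin' (Rmat F q m (m + n)) + q • LinearMap.id) = 0) ∧
      Matrix.toLin' (Rmat F q m (m + n)) ∘ₗ Matrix.toLin' (Rmat F q m (m + n)) =
        (q⁻¹ - q) • Matrix.toLin' (Rmat F q m (m + n)) + LinearMap.id := by

  have hsq : Matrix.toLin' (Rmat F q m (m + n)) ∘ₗ Matrix.toLin' (Rmat F q m (m + n)) =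
      (q⁻¹ - q) • Matrix.toLin' (Rmat F q m (m + n)) + LinearMap.id := by
    rw [← Matrix.toLin'_mul, Rmat_sq F q hq]
    simp only [map_add, map_smul, Matrix.toLin'_one]
  refine ⟨?_, hsq⟩
  have hsq' : Matrix.toLin' (Rmat F q m (m + n)) * Matrix.toLin' (Rmat F q m (m + n)) =
      (q⁻¹ - q) • Matrix.toLin' (Rmat F q m (m + n)) + 1 := by
    rw [Module.End.mul_eq_comp, Module.End.one_eq_id]; exact hsq
  rw [← Module.End.one_eq_id, ← Module.End.mul_eq_comp, sub_mul, mul_add, smul_mul_assoc,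
    mul_smul_comm, one_mul, mul_one, hsq']
  match_scalars <;> field_simp <;> ring
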